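/- Let R and B be finite disjoint sets of points in ℝ^d. Suppose that for every subset S ⊆ R ∪ B with at most d+2 points, the set S ∩ R can be strictly separated from S ∩ B by a hyperplane. Then R can be strictly separated from B by a hyperplane. -/

import Mathlib

open scoped Classical

/-- `A` and `B` are strictly separated by a hyperplane. -/
def StrictlySeparated {d : ℕ} (A B : Set (EuclideanSpace ℝ (Fin d))) : Prop :=
  ∃ u : EuclideanSpace ℝ (Fin d), u ≠ 0 ∧ ∃ t : ℝ,
    (∀ a ∈ A, (inner ℝ u a : ℝ) < t) ∧ (∀ b ∈ B, t < (inner ℝ u b : ℝ))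

/-- **Kirchberger's theorem**. -/
theorem kirchberger (d : ℕ) (R B : Finset (EuclideanSpace ℝ (Fin d))) (hRB : Disjoint R B)
    (h : ∀ S : Finset (EuclideanSpace ℝ (Fin d)), S ⊆ R ∪ B → S.card ≤ d + 2 →
      StrictlySeparated ((S ∩ R : Finset (EuclideanSpace ℝ (Fin d))) :
          Set (EuclideanSpace ℝ (Fin d)))
        ((S ∩ B : Finset (EuclideanSpace ℝ (Fin d))) : Set (EuclideanSpace ℝ (Fin d)))) :
    StrictlySeparated (R : Set (EuclideanSpace ℝ (Fin d)))
      (B : Set (EuclideanSpace ℝ (Fin d))) := by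
  classical
  -- Trivial case: few points
  by_cases hcard : (R ∪ B).card ≤ d + 2
  · have := h (R ∪ B) subset_rfl hcard
    rwa [Finset.union_inter_cancel_right, Finset.union_inter_cancel_left] at this
  rcases Finset.eq_empty_or_nonempty R with hRe | hRne
  · -- R empty: take any nonzero u from hypothesis, t small enough
    obtain ⟨u, hu, -⟩ := h ∅ (by simp) (by simp)
    have hBne : B.Nonempty := by
      rcases Finset.eq_empty_or_nonempty B with hBe | hBne
      · simp [hRe, hBe] at hcard
      · exact hBne
    refine ⟨u, hu, (B.inf' hBne fun b => (inner ℝ u b : ℝ)) - 1, ?_, ?_⟩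
    · simp [hRe]
    · intro b hb
      have := Finset.inf'_le (fun b => (inner ℝ u b : ℝ)) (by simpa using hb)
      linarith
  rcases Finset.eq_empty_or_nonempty B with hBe | hBne
  · obtain ⟨u, hu, -⟩ := h ∅ (by simp) (by simp)
    refine ⟨u, hu, (R.sup' hRne fun a => (inner ℝ u a : ℝ)) + 1, ?_, ?_⟩
    · intro a ha
      have := Finset.le_sup' (fun a => (inner ℝ u a : ℝ)) (by simpa using ha)
      linarith
    · simp [hBe]
  -- Main case: use Helly's theorem in ℝ^d × ℝ
  set E' := EuclideanSpace ℝ (Fin d) × ℝ with hE'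
  have hrank : Module.finrank ℝ E' = d + 1 := by
    have : Module.finrank ℝ (EuclideanSpace ℝ (Fin d) × ℝ) = d + 1 := by
      rw [Module.finrank_prod, finrank_euclideanSpace, Module.finrank_self]
      simp
    exact this
  set F : EuclideanSpace ℝ (Fin d) → Set E' :=
    fun p => if p ∈ R then {x : E' | (inner ℝ x.1 p : ℝ) < x.2}
      else {x : E' | x.2 < (inner ℝ x.1 p : ℝ)} with hF
  have hconv : ∀ p ∈ R ∪ B, Convex ℝ (F p) := by
    intro p _
    set L : E' →ₗ[ℝ] ℝ :=
      ((innerSL ℝ p).toLinearMap.comp (LinearMap.fst ℝ _ ℝ)) - LinearMap.snd ℝ _ ℝ with hL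
    have hLapp : ∀ x : E', L x = (inner ℝ p x.1 : ℝ) - x.2 := by
      intro x
      simp only [hL, LinearMap.sub_apply, LinearMap.coe_comp, Function.comp_apply,
        ContinuousLinearMap.coe_coe, innerSL_apply_apply, LinearMap.fst_apply, LinearMap.snd_apply]
      rfl
    simp only [hF]
    split_ifs
    · have := convex_halfSpace_lt L.isLinear 0
      convert this using 1
      · rfl
      ext x
      simp only [Set.mem_setOf_eq, hLapp]
      rw [real_inner_comm]
      constructor <;> intro <;> linarith
    · have := convex_halfSpace_gt L.isLinear 0
      convert this using 1
      · rfl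
      ext x
      simp only [Set.mem_setOf_eq, hLapp]
      rw [real_inner_comm]
      constructor <;> intro <;> linarith
  have hinter : ∀ I ⊆ R ∪ B, I.card ≤ Module.finrank ℝ E' + 1 →
      (⋂ i ∈ I, F i).Nonempty := by
    intro I hI hcardI
    rw [hrank] at hcardI
    obtain ⟨u, hu, t, h1, h2⟩ := h I hI hcardI
    refine ⟨(u, t), Set.mem_biInter fun p hp => ?_⟩
    have hp' : p ∈ I := by simpa using hp
    simp only [hF]
    split_ifs with hpR
    · exact h1 p (by simp [Finset.mem_inter, hp', hpR])
    · have hpB : p ∈ B := by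
        have := hI hp'
        rw [Finset.mem_union] at this
        tauto
      exact h2 p (by simp [Finset.mem_inter, hp', hpB])
  obtain ⟨⟨u, t⟩, hx⟩ := Convex.helly_theorem' (𝕜 := ℝ) hconv hinter
  have hxmem : ∀ p ∈ R ∪ B, (u, t) ∈ F p := by
    intro p hp
    exact Set.mem_iInter₂.mp hx p (by simpa using hp)
  have hRlt : ∀ a ∈ R, (inner ℝ u a : ℝ) < t := by
    intro a ha
    have := hxmem a (Finset.mem_union_left _ ha)
    simp only [hF] at this
    simp only [ha, ↓reduceIte] at this
    exact this
  have hBgt : ∀ b ∈ B, t < (inner ℝ u b : ℝ) := by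
    intro b hb
    have hbR : b ∉ R := fun hbR => (Finset.disjoint_left.mp hRB hbR) hb
    have := hxmem b (Finset.mem_union_right _ hb)
    simp only [hF] at this
    simp only [hbR, ↓reduceIte] at this
    exact this
  have hu : u ≠ 0 := by
    intro hu0
    obtain ⟨a, ha⟩ := hRne
    obtain ⟨b, hb⟩ := hBne
    have h1 := hRlt a ha
    have h2 := hBgt b hb
    rw [hu0] at h1 h2
    simp [inner_zero_left] at h1 h2
    linarith
  exact ⟨u, hu, t, by simpa using hRlt, by simpa using hBgt⟩
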